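/- Let a_n + 1 = (p^*/p₁)^n (a_0 + 1) with p₁ < p^*, a_0 ≥ 0, and suppose a nonnegative function u on a finite measure space satisfies ‖u‖_{(a_n+1)p^*} ≤ M₁^{1/(a_n+1)} M₂^{1/√(a_n+1)} ‖u‖_{(a_{n-1}+1)p^*} for all n ≥ 1, with M₁, M₂ ≥ 1 and ‖u‖_{(a_0+1)p^*} < ∞. Then sup_n ‖u‖_{(a_n+1)p^*} < ∞ and hence u ∈ L^∞. -/

import Mathlib

open MeasureTheory ENNReal

theorem stmt17 {X : Type*} [MeasurableSpace X] (μ : Measure X) [IsFiniteMeasure μ]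
    (u : X → ℝ) (hu : Measurable u) (hunn : ∀ x, 0 ≤ u x)
    (p₁ pstar : ℝ) (hp₁ : 0 < p₁) (hpp : p₁ < pstar)
    (a : ℕ → ℝ) (ha0 : 0 ≤ a 0)
    (ha : ∀ n : ℕ, a n + 1 = (pstar / p₁) ^ n * (a 0 + 1))
    (M₁ M₂ : ℝ) (hM₁ : 1 ≤ M₁) (hM₂ : 1 ≤ M₂)
    (hfin : eLpNorm u (ENNReal.ofReal ((a 0 + 1) * pstar)) μ < ⊤)
    (hrec : ∀ n : ℕ,
      eLpNorm u (ENNReal.ofReal ((a (n + 1) + 1) * pstar)) μ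
        ≤ ENNReal.ofReal (M₁ ^ (1 / (a (n + 1) + 1)) *
              M₂ ^ (1 / Real.sqrt (a (n + 1) + 1))) *
            eLpNorm u (ENNReal.ofReal ((a n + 1) * pstar)) μ) :
    (∃ C : ℝ≥0∞, C < ⊤ ∧
        ∀ n : ℕ, eLpNorm u (ENNReal.ofReal ((a n + 1) * pstar)) μ ≤ C) ∧
      MemLp u ⊤ μ := by
  have hps : 0 < pstar := hp₁.trans hpp
  set r : ℝ := pstar / p₁ with hr
  have hr1 : 1 < r := (one_lt_div hp₁).mpr hpp
  set q : ℝ := p₁ / pstar with hq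
  have hq0 : 0 < q := div_pos hp₁ hps
  have hq1 : q < 1 := (div_lt_one hps).mpr hpp
  have hqr : q * r = 1 := by rw [hq, hr]; field_simp
  set ρ : ℝ := Real.sqrt q with hρ
  have hρ0 : 0 < ρ := Real.sqrt_pos.mpr hq0
  have hρ1 : ρ < 1 := by
    rw [hρ, show (1:ℝ) = Real.sqrt 1 from (Real.sqrt_one).symm]
    exact Real.sqrt_lt_sqrt hq0.le hq1
  have hM₁0 : (0:ℝ) < M₁ := lt_of_lt_of_le one_pos hM₁
  have hM₂0 : (0:ℝ) < M₂ := lt_of_lt_of_le one_pos hM₂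
  have ha1 : ∀ n, 1 ≤ a n + 1 := by
    intro n
    rw [ha n]
    have h1 : (1:ℝ) ≤ r ^ n := one_le_pow₀ hr1.le
    nlinarith
  have hapos : ∀ n, 0 < a n + 1 := fun n => lt_of_lt_of_le one_pos (ha1 n)
  have hqa : ∀ n : ℕ, q ^ n * (a n + 1) = a 0 + 1 := by
    intro n
    rw [ha n, ← mul_assoc, ← mul_pow, hqr, one_pow, one_mul]
  -- bound on 1/(a n + 1)
  have hinv : ∀ n, 1 / (a n + 1) ≤ q ^ n := by
    intro n
    rw [div_le_iff₀ (hapos n), hqa n]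
    linarith
  have hρn : ∀ n : ℕ, Real.sqrt (q ^ n) = ρ ^ n := by
    intro n
    rw [show q = ρ ^ 2 from (Real.sq_sqrt hq0.le).symm, pow_right_comm,
      Real.sqrt_sq (by positivity)]
  -- bound on 1/sqrt(a n + 1)
  have hsq : ∀ n, 1 / Real.sqrt (a n + 1) ≤ ρ ^ n := by
    intro n
    have hs : 0 < Real.sqrt (a n + 1) := Real.sqrt_pos.mpr (hapos n)
    rw [div_le_iff₀ hs, ← hρn n, ← Real.sqrt_mul (by positivity), hqa n]
    rw [Real.one_le_sqrt]
    linarith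
  -- the partial sums of exponents
  set s : ℕ → ℝ := fun n => ∑ k ∈ Finset.range n, q ^ (k + 1) with hs
  set t : ℕ → ℝ := fun n => ∑ k ∈ Finset.range n, ρ ^ (k + 1) with ht
  have hsle : ∀ n, s n ≤ (1 - q)⁻¹ := by
    intro n
    calc s n ≤ ∑ k ∈ Finset.range n, q ^ k := by
          apply Finset.sum_le_sum
          intro k _
          exact pow_le_pow_of_le_one hq0.le hq1.le (Nat.le_succ k)
    _ ≤ ∑' k : ℕ, q ^ k :=
          Summable.sum_le_tsum _ (fun k _ => by positivity) (summable_geometric_of_lt_one hq0.le hq1)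
    _ = (1 - q)⁻¹ := tsum_geometric_of_lt_one hq0.le hq1
  have htle : ∀ n, t n ≤ (1 - ρ)⁻¹ := by
    intro n
    calc t n ≤ ∑ k ∈ Finset.range n, ρ ^ k := by
          apply Finset.sum_le_sum
          intro k _
          exact pow_le_pow_of_le_one hρ0.le hρ1.le (Nat.le_succ k)
    _ ≤ ∑' k : ℕ, ρ ^ k :=
          Summable.sum_le_tsum _ (fun k _ => by positivity) (summable_geometric_of_lt_one hρ0.le hρ1)
    _ = (1 - ρ)⁻¹ := tsum_geometric_of_lt_one hρ0.le hρ1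
  set B : ℕ → ℝ≥0∞ := fun n => eLpNorm u (ENNReal.ofReal ((a n + 1) * pstar)) μ with hB
  -- main induction
  have main : ∀ n, B n ≤ ENNReal.ofReal (M₁ ^ s n * M₂ ^ t n) * B 0 := by
    intro n
    induction n with
    | zero =>
        simp [hs, ht]
    | succ n ih =>
        have step := hrec n
        have h1 : B (n + 1) ≤ ENNReal.ofReal (M₁ ^ (1 / (a (n + 1) + 1)) *
            M₂ ^ (1 / Real.sqrt (a (n + 1) + 1))) * (ENNReal.ofReal (M₁ ^ s n * M₂ ^ t n) * B 0) :=
          le_trans step (by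
            exact mul_le_mul_right ih _)
        refine le_trans h1 ?_
        rw [← mul_assoc, ← ENNReal.ofReal_mul (by positivity)]
        apply mul_le_mul_left
        apply ENNReal.ofReal_le_ofReal
        have hexp : M₁ ^ (1 / (a (n + 1) + 1)) * M₂ ^ (1 / Real.sqrt (a (n + 1) + 1)) *
            (M₁ ^ s n * M₂ ^ t n) =
            M₁ ^ (1 / (a (n + 1) + 1) + s n) * M₂ ^ (1 / Real.sqrt (a (n + 1) + 1) + t n) := by
          rw [Real.rpow_add hM₁0, Real.rpow_add hM₂0]; ring
        rw [hexp]
        have hs1 : 1 / (a (n + 1) + 1) + s n ≤ s (n + 1) := by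
          have := hinv (n + 1)
          simp only [hs, Finset.sum_range_succ]
          linarith
        have ht1 : 1 / Real.sqrt (a (n + 1) + 1) + t n ≤ t (n + 1) := by
          have := hsq (n + 1)
          simp only [ht, Finset.sum_range_succ]
          linarith
        exact mul_le_mul (Real.rpow_le_rpow_of_exponent_le hM₁ hs1)
          (Real.rpow_le_rpow_of_exponent_le hM₂ ht1) (by positivity) (by positivity)
  set K : ℝ := M₁ ^ (1 - q)⁻¹ * M₂ ^ (1 - ρ)⁻¹ with hK
  set C : ℝ≥0∞ := ENNReal.ofReal K * B 0 with hC
  have hCtop : C < ⊤ := ENNReal.mul_lt_top ENNReal.ofReal_lt_top hfin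
  have hbound : ∀ n, B n ≤ C := by
    intro n
    refine le_trans (main n) (mul_le_mul_left (ENNReal.ofReal_le_ofReal ?_) _)
    exact mul_le_mul (Real.rpow_le_rpow_of_exponent_le hM₁ (hsle n))
      (Real.rpow_le_rpow_of_exponent_le hM₂ (htle n)) (by positivity) (by positivity)
  refine ⟨⟨C, hCtop, hbound⟩, ?_⟩
  -- now the L^∞ membership
  have huae : AEStronglyMeasurable u μ := hu.aestronglyMeasurable
  refine ⟨huae, ?_⟩
  have hCne : C ≠ ⊤ := hCtop.ne
  set ρ' : ℝ≥0∞ := C / (C + 1) with hρ'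
  have hρ'1 : ρ' < 1 := by
    rw [hρ', ENNReal.div_lt_iff (Or.inl (by simp)) (Or.inl (by simp [hCne])), one_mul]
    exact ENNReal.lt_add_right hCne one_ne_zero
  -- the key measure bound
  have hmeas : μ {x | (C + 1 : ℝ≥0∞) ≤ (‖u x‖₊ : ℝ≥0∞)} = 0 := by
    set S := {x | (C + 1 : ℝ≥0∞) ≤ (‖u x‖₊ : ℝ≥0∞)} with hS
    have key : ∀ m : ℕ, μ S ≤ ρ' ^ m := by
      intro m
      obtain ⟨n, hn⟩ := pow_unbounded_of_one_lt ((m : ℝ) / ((a 0 + 1) * pstar)) hr1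
      have htn : (m : ℝ) ≤ (a n + 1) * pstar := by
        rw [ha n]
        have h2 : (m : ℝ) / ((a 0 + 1) * pstar) * ((a 0 + 1) * pstar) ≤
            r ^ n * ((a 0 + 1) * pstar) := by
          apply mul_le_mul_of_nonneg_right hn.le (mul_pos (by linarith) hps).le
        rw [div_mul_cancel₀ _ (ne_of_gt (mul_pos (by linarith) hps))] at h2
        linarith [h2]
      have hpn0 : (0:ℝ) < (a n + 1) * pstar := mul_pos (hapos n) hps
      have hpne0 : ENNReal.ofReal ((a n + 1) * pstar) ≠ 0 := by
        simp [ENNReal.ofReal_eq_zero, not_le, hpn0]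
      have hpnetop : ENNReal.ofReal ((a n + 1) * pstar) ≠ ⊤ := ENNReal.ofReal_ne_top
      have hch := meas_ge_le_mul_pow_eLpNorm_enorm (μ := μ) hpne0 hpnetop huae
        (ε := C + 1) (by simp) (fun h => absurd h (by simp [hCne]))
      rw [ENNReal.toReal_ofReal hpn0.le] at hch
      have hTnn : (0:ℝ) ≤ (a n + 1) * pstar := hpn0.le
      calc μ S ≤ (C + 1)⁻¹ ^ ((a n + 1) * pstar) *
            eLpNorm u (ENNReal.ofReal ((a n + 1) * pstar)) μ ^ ((a n + 1) * pstar) := hch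
      _ ≤ (C + 1)⁻¹ ^ ((a n + 1) * pstar) * C ^ ((a n + 1) * pstar) := by
            gcongr
            exact hbound n
      _ = ρ' ^ ((a n + 1) * pstar) := by
            rw [hρ', ENNReal.div_eq_inv_mul]
            exact (ENNReal.mul_rpow_of_nonneg _ _ hTnn).symm
      _ ≤ ρ' ^ ((m : ℝ)) := ENNReal.rpow_le_rpow_of_exponent_ge hρ'1.le htn
      _ = ρ' ^ m := ENNReal.rpow_natCast ρ' m
    have hlim := ENNReal.tendsto_pow_atTop_nhds_zero_of_lt_one hρ'1
    have : μ S ≤ 0 := ge_of_tendsto' hlim key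
    exact le_zero_iff.mp this
  have hae : ∀ᵐ x ∂μ, (‖u x‖₊ : ℝ≥0∞) ≤ C + 1 := by
    have h1 : ∀ᵐ x ∂μ, (‖u x‖₊ : ℝ≥0∞) < C + 1 := by
      rw [ae_iff]
      simp only [not_lt]
      exact hmeas
    exact h1.mono fun x hx => hx.le
  rw [eLpNorm_exponent_top]
  exact lt_of_le_of_lt (essSup_le_of_ae_le (C + 1) hae)
    (ENNReal.add_lt_top.mpr ⟨hCtop, ENNReal.one_lt_top⟩)
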